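/- (Overlap of a product of subsystem ground states with the interacting ground state.) Let H_A (d_A×d_A) and H_B (d_B×d_B) be Hermitian complex matrices whose smallest eigenvalues are simple, with unit ground eigenvectors ψ_A, ψ_B and spectral gaps γ_A, γ_B > 0; set γ̃ := min(γ_A, γ_B). Let A_int be a Hermitian matrix on ℂ^{d_A d_B} with γ̃ > 2‖A_int‖, and let ψ be a unit eigenvector of H := H_A ⊗ 𝟙 + 𝟙 ⊗ H_B + A_int corresponding to its smallest eigenvalue. Then |⟨ψ, ψ_A ⊗ ψ_B⟩|² ≥ 1 − π‖A_int‖/(γ̃ − 2‖A_int‖). -/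

import Mathlib

open Matrix Kronecker

set_option linter.unusedSectionVars false
set_option maxHeartbeats 1000000

/-- The spectral norm (largest singular value) of a complex matrix, i.e. the operator norm
induced by the Euclidean norm. -/
noncomputable def specNorm {m : Type*} [Fintype m] [DecidableEq m] (M : Matrix m m ℂ) : ℝ :=
  ‖Matrix.toEuclideanCLM (𝕜 := ℂ) M‖

namespace GSO

set_option linter.unusedSectionVars false

variable {n : Type*} [Fintype n] [DecidableEq n]

noncomputable def Umat (v : n → n → ℂ) : Matrix n n ℂ := Matrix.of fun j i => star (v j i)

lemma Umat_mul (v : n → n → ℂ)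
    (hv : ∀ j k, star (v j) ⬝ᵥ v k = if j = k then 1 else 0) :
    Umat v * (Umat v)ᴴ = 1 := by
  ext j k
  have := hv j k
  simp only [dotProduct, Pi.star_apply, RCLike.star_def] at this
  simp [Umat, Matrix.mul_apply, Matrix.conjTranspose_apply, Matrix.one_apply, this]

lemma Umat_mul' (v : n → n → ℂ)
    (hv : ∀ j k, star (v j) ⬝ᵥ v k = if j = k then 1 else 0) :
    (Umat v)ᴴ * Umat v = 1 := mul_eq_one_comm.mp (Umat_mul v hv)

lemma Umat_mulVec (v : n → n → ℂ) (w : n → ℂ) (j : n) :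
    (Umat v).mulVec w j = star (v j) ⬝ᵥ w := rfl

lemma expand (v : n → n → ℂ)
    (hv : ∀ j k, star (v j) ⬝ᵥ v k = if j = k then 1 else 0) (w : n → ℂ) (i : n) :
    w i = ∑ j, (star (v j) ⬝ᵥ w) * v j i := by
  have h : (Umat v)ᴴ.mulVec ((Umat v).mulVec w) = w := by
    rw [Matrix.mulVec_mulVec, Umat_mul' v hv, Matrix.one_mulVec]
  have h2 := congrFun h i
  rw [← h2]
  simp only [Matrix.mulVec, dotProduct, Matrix.conjTranspose_apply, Umat, Matrix.of_apply,
    star_star, Pi.star_apply]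
  exact Finset.sum_congr rfl fun j _ => mul_comm _ _

lemma parseval (v : n → n → ℂ)
    (hv : ∀ j k, star (v j) ⬝ᵥ v k = if j = k then 1 else 0) (w : n → ℂ) :
    star w ⬝ᵥ w = ∑ j, (Complex.normSq (star (v j) ⬝ᵥ w) : ℂ) := by
  have h : star ((Umat v).mulVec w) ⬝ᵥ ((Umat v).mulVec w) = star w ⬝ᵥ w := by
    rw [Matrix.star_mulVec, Matrix.dotProduct_mulVec, Matrix.vecMul_vecMul,
      Umat_mul' v hv, Matrix.vecMul_one]
  rw [← h]
  simp only [dotProduct, Pi.star_apply]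
  refine Finset.sum_congr rfl fun j _ => ?_
  rw [Umat_mulVec v w j, RCLike.star_def, mul_comm, Complex.mul_conj]
  norm_cast

lemma rayleigh (M : Matrix n n ℂ) (v : n → n → ℂ)
    (hv : ∀ j k, star (v j) ⬝ᵥ v k = if j = k then 1 else 0)
    (μ : n → ℝ) (heig : ∀ j, M.mulVec (v j) = (μ j : ℂ) • v j) (w : n → ℂ) :
    star w ⬝ᵥ M.mulVec w = ∑ j, (μ j : ℂ) * (Complex.normSq (star (v j) ⬝ᵥ w) : ℂ) := by
  have hMU : M * (Umat v)ᴴ = (Umat v)ᴴ * (Matrix.diagonal (fun j => (μ j : ℂ))) := by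
    ext i j
    have h1 := congrFun (heig j) i
    simp only [Matrix.mulVec, dotProduct, Pi.smul_apply, smul_eq_mul] at h1
    rw [Matrix.mul_diagonal]
    simp only [Matrix.mul_apply, Matrix.conjTranspose_apply, Umat, Matrix.of_apply, star_star]
    rw [h1]; ring
  have hstep : star w ⬝ᵥ M.mulVec w
      = star ((Umat v).mulVec w) ⬝ᵥ (Matrix.diagonal (fun j => (μ j : ℂ))).mulVec ((Umat v).mulVec w) := by
    calc star w ⬝ᵥ M.mulVec w
        = star w ⬝ᵥ ((M * (Umat v)ᴴ) * Umat v).mulVec w := by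
          rw [Matrix.mul_assoc, Umat_mul' v hv, Matrix.mul_one]
      _ = star w ⬝ᵥ (((Umat v)ᴴ * (Matrix.diagonal (fun j => (μ j : ℂ)))) * Umat v).mulVec w := by rw [hMU]
      _ = star w ⬝ᵥ ((Umat v)ᴴ.mulVec (((Matrix.diagonal (fun j => (μ j : ℂ))) * Umat v).mulVec w)) := by
          rw [Matrix.mulVec_mulVec, Matrix.mul_assoc]
      _ = (star w ᵥ* (Umat v)ᴴ) ⬝ᵥ (((Matrix.diagonal (fun j => (μ j : ℂ))) * Umat v).mulVec w) := by
          rw [Matrix.dotProduct_mulVec]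
      _ = star ((Umat v).mulVec w) ⬝ᵥ (Matrix.diagonal (fun j => (μ j : ℂ))).mulVec ((Umat v).mulVec w) := by
          rw [← Matrix.star_mulVec, ← Matrix.mulVec_mulVec]
  rw [hstep]
  simp only [dotProduct, Pi.star_apply, Matrix.mulVec_diagonal]
  refine Finset.sum_congr rfl fun j _ => ?_
  rw [Umat_mulVec v w j, RCLike.star_def,
    show (starRingEnd ℂ) (star (v j) ⬝ᵥ w) * ((μ j : ℂ) * (star (v j) ⬝ᵥ w))
    = (μ j : ℂ) * ((star (v j) ⬝ᵥ w) * (starRingEnd ℂ) (star (v j) ⬝ᵥ w)) from by ring,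
    Complex.mul_conj]
  norm_cast




lemma kron_mulVec {nA nB : Type*} [Fintype nA] [Fintype nB]
    (A : Matrix nA nA ℂ) (B : Matrix nB nB ℂ) (x : nA → ℂ) (y : nB → ℂ) :
    (A ⊗ₖ B).mulVec (fun i => x i.1 * y i.2)
      = fun i => (A.mulVec x) i.1 * (B.mulVec y) i.2 := by
  funext i
  simp only [Matrix.mulVec, dotProduct, Fintype.sum_prod_type, kroneckerMap_apply,
    Finset.mul_sum, Finset.sum_mul]
  rw [Finset.sum_comm]
  apply Finset.sum_congr rfl; intro j1 _
  apply Finset.sum_congr rfl; intro j2 _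
  ring

lemma kron_dot {nA nB : Type*} [Fintype nA] [Fintype nB]
    (x x' : nA → ℂ) (y y' : nB → ℂ) :
    star (fun i : nA × nB => x i.1 * y i.2) ⬝ᵥ (fun i => x' i.1 * y' i.2)
      = (star x ⬝ᵥ x') * (star y ⬝ᵥ y') := by
  simp only [dotProduct, Pi.star_apply, Fintype.sum_prod_type, Finset.mul_sum, Finset.sum_mul]
  rw [Finset.sum_comm]
  apply Finset.sum_congr rfl; intro j1 _
  apply Finset.sum_congr rfl; intro j2 _
  simp only [star_mul']
  ring

lemma dot_comm_star {n : Type*} [Fintype n] (x y : n → ℂ) :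
    star x ⬝ᵥ y = starRingEnd ℂ (star y ⬝ᵥ x) := by
  simp only [dotProduct, Pi.star_apply, map_sum, _root_.map_mul, RCLike.star_def,
    Complex.conj_conj]
  exact Finset.sum_congr rfl fun i _ => mul_comm _ _

lemma abs_dot_le {n : Type*} [Fintype n] [DecidableEq n] (M : Matrix n n ℂ) (w : n → ℂ)
    (hw : star w ⬝ᵥ w = 1) :
    ‖star w ⬝ᵥ M.mulVec w‖ ≤ specNorm M := by
  set x : EuclideanSpace ℂ n := (WithLp.equiv 2 _).symm w with hx
  have hinner : (inner ℂ x x : ℂ) = 1 := by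
    rw [hx]; show w ⬝ᵥ star w = 1; rw [dotProduct_comm]; exact hw
  have hnx : ‖x‖ = 1 := by
    have h2 : ‖x‖ ^ 2 = 1 := by
      rw [norm_sq_eq_re_inner (𝕜 := ℂ), hinner]; simp
    nlinarith [norm_nonneg x]
  have heq : star w ⬝ᵥ M.mulVec w = inner ℂ x (Matrix.toEuclideanCLM (𝕜 := ℂ) M x) := by
    rw [hx]; show _ = (M *ᵥ w) ⬝ᵥ star w; rw [dotProduct_comm]
  rw [heq]
  calc ‖(inner ℂ x (Matrix.toEuclideanCLM (𝕜 := ℂ) M x) : ℂ)‖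
      ≤ ‖x‖ * ‖Matrix.toEuclideanCLM (𝕜 := ℂ) M x‖ := norm_inner_le_norm x _
    _ ≤ ‖x‖ * (‖Matrix.toEuclideanCLM (𝕜 := ℂ) M‖ * ‖x‖) := by
        gcongr
        exact ContinuousLinearMap.le_opNorm _ x
    _ = specNorm M := by rw [hnx, specNorm]; ring



lemma kron_conjTranspose {nA nB : Type*} [Fintype nA] [Fintype nB]
    (A : Matrix nA nA ℂ) (B : Matrix nB nB ℂ) : (A ⊗ₖ B)ᴴ = Aᴴ ⊗ₖ Bᴴ := by
  ext i j
  simp [Matrix.conjTranspose_apply, kroneckerMap_apply, star_mul']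

lemma coeff_zero {n : Type*} [Fintype n] [DecidableEq n] (M : Matrix n n ℂ)
    (hM : M.IsHermitian) (u : n → ℂ) (μ : ℝ) (hu : M.mulVec u = (μ : ℂ) • u)
    (w : n → ℂ) (ν : ℝ) (hw : M.mulVec w = (ν : ℂ) • w) (hne : μ ≠ ν) :
    star u ⬝ᵥ w = 0 := by
  have h1 : star u ⬝ᵥ M.mulVec w = (ν : ℂ) * (star u ⬝ᵥ w) := by
    rw [hw, dotProduct_smul, smul_eq_mul]
  have hvm : star u ᵥ* M = (μ : ℂ) • star u := by
    have h := congrArg star hu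
    rw [Matrix.star_mulVec, hM.eq] at h
    rw [h, star_smul]
    congr 1
    simp [Complex.star_def, Complex.conj_ofReal]
  have h2 : star u ⬝ᵥ M.mulVec w = (μ : ℂ) * (star u ⬝ᵥ w) := by
    rw [Matrix.dotProduct_mulVec, hvm, smul_dotProduct, smul_eq_mul]
  have h3 : ((μ : ℂ) - (ν : ℂ)) * (star u ⬝ᵥ w) = 0 := by
    rw [sub_mul, ← h1, ← h2, sub_self]
  rcases mul_eq_zero.mp h3 with h | h
  · exact absurd (Complex.ofReal_inj.mp (by linear_combination h)) hne
  · exact h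

lemma eigBasis_dot {n : Type*} [Fintype n] [DecidableEq n] {M : Matrix n n ℂ}
    (hM : M.IsHermitian) (j k : n) :
    star (⇑(hM.eigenvectorBasis j) : n → ℂ) ⬝ᵥ ⇑(hM.eigenvectorBasis k)
      = if j = k then 1 else 0 := by
  have h := hM.eigenvectorBasis.orthonormal
  rw [orthonormal_iff_ite] at h
  have h2 := h j k
  rwa [EuclideanSpace.inner_eq_star_dotProduct, dotProduct_comm] at h2

lemma eigBasis_mulVec {n : Type*} [Fintype n] [DecidableEq n] {M : Matrix n n ℂ}
    (hM : M.IsHermitian) (j : n) :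
    M.mulVec (⇑(hM.eigenvectorBasis j) : n → ℂ)
      = ((hM.eigenvalues j : ℝ) : ℂ) • (⇑(hM.eigenvectorBasis j) : n → ℂ) := by
  have h := hM.mulVec_eigenvectorBasis j
  rw [h]
  funext i
  simp [Pi.smul_apply, Complex.real_smul]

lemma eigBasis_ne_zero {n : Type*} [Fintype n] [DecidableEq n] {M : Matrix n n ℂ}
    (hM : M.IsHermitian) (j : n) :
    (⇑(hM.eigenvectorBasis j) : n → ℂ) ≠ 0 := by
  intro h
  apply hM.eigenvectorBasis.orthonormal.ne_zero j
  ext i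
  exact congrFun h i


end GSO


/-- **Overlap of the product of subsystem ground states with the interacting ground state.**
Let `HA, HB` be Hermitian with nondecreasing eigenvalue listings `α, β` (orthonormal
eigenbases `vA, vB`), simple smallest eigenvalues with unit ground eigenvectors `ψA, ψB`
and spectral gaps `γA = α 1 - α 0 > 0`, `γB = β 1 - β 0 > 0`; set `γ̃ = min γA γB`.  Let
`Aint` be Hermitian on the product space with `γ̃ > 2 ‖Aint‖`, and let `ψ` be a unit
eigenvector of `H = HA ⊗ 𝟙 + 𝟙 ⊗ HB + Aint` for its smallest eigenvalue.  Then
`|⟨ψ, ψA ⊗ ψB⟩|² ≥ 1 - π ‖Aint‖ / (γ̃ - 2 ‖Aint‖)`. -/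
theorem product_ground_state_overlap {dA dB : ℕ} (hdA : 2 ≤ dA) (hdB : 2 ≤ dB)
    (HA : Matrix (Fin dA) (Fin dA) ℂ) (HB : Matrix (Fin dB) (Fin dB) ℂ)
    (hHA : HA.IsHermitian) (hHB : HB.IsHermitian)
    (α : Fin dA → ℝ) (β : Fin dB → ℝ) (hα : Monotone α) (hβ : Monotone β)
    (vA : Fin dA → (Fin dA → ℂ)) (vB : Fin dB → (Fin dB → ℂ))
    (hvA : ∀ j k, star (vA j) ⬝ᵥ vA k = if j = k then 1 else 0)
    (hvB : ∀ j k, star (vB j) ⬝ᵥ vB k = if j = k then 1 else 0)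
    (heigA : ∀ j, HA.mulVec (vA j) = (α j : ℂ) • vA j)
    (heigB : ∀ j, HB.mulVec (vB j) = (β j : ℂ) • vB j)
    (hγA : 0 < α ⟨1, by omega⟩ - α ⟨0, by omega⟩)
    (hγB : 0 < β ⟨1, by omega⟩ - β ⟨0, by omega⟩)
    (ψA : Fin dA → ℂ) (ψB : Fin dB → ℂ)
    (hψA1 : star ψA ⬝ᵥ ψA = 1) (hψB1 : star ψB ⬝ᵥ ψB = 1)
    (hψA : HA.mulVec ψA = (α ⟨0, by omega⟩ : ℂ) • ψA)
    (hψB : HB.mulVec ψB = (β ⟨0, by omega⟩ : ℂ) • ψB)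
    (Aint : Matrix (Fin dA × Fin dB) (Fin dA × Fin dB) ℂ) (hAint : Aint.IsHermitian)
    (hgap : 2 * specNorm Aint <
      min (α ⟨1, by omega⟩ - α ⟨0, by omega⟩) (β ⟨1, by omega⟩ - β ⟨0, by omega⟩))
    (ψ : Fin dA × Fin dB → ℂ) (hψ1 : star ψ ⬝ᵥ ψ = 1) (E0 : ℝ)
    (hψ : (HA ⊗ₖ (1 : Matrix (Fin dB) (Fin dB) ℂ) +
      (1 : Matrix (Fin dA) (Fin dA) ℂ) ⊗ₖ HB + Aint).mulVec ψ = (E0 : ℂ) • ψ)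
    (hE0min : ∀ (ν : ℝ) (w : Fin dA × Fin dB → ℂ), w ≠ 0 →
      (HA ⊗ₖ (1 : Matrix (Fin dB) (Fin dB) ℂ) +
        (1 : Matrix (Fin dA) (Fin dA) ℂ) ⊗ₖ HB + Aint).mulVec w = (ν : ℂ) • w → E0 ≤ ν) :
    1 - Real.pi * specNorm Aint /
        (min (α ⟨1, by omega⟩ - α ⟨0, by omega⟩) (β ⟨1, by omega⟩ - β ⟨0, by omega⟩) -
          2 * specNorm Aint) ≤
      ‖(star ψ ⬝ᵥ fun i => ψA i.1 * ψB i.2)‖ ^ 2 := by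
  classical
  set a := specNorm Aint with ha
  have ha0 : 0 ≤ a := norm_nonneg _
  set i0 : Fin dA := ⟨0, by omega⟩ with hi0
  set i1 : Fin dA := ⟨1, by omega⟩ with hi1
  set j0 : Fin dB := ⟨0, by omega⟩ with hj0
  set j1 : Fin dB := ⟨1, by omega⟩ with hj1
  set γ := min (α i1 - α i0) (β j1 - β j0) with hγ
  have hγpos : 0 < γ := lt_of_le_of_lt (by linarith) hgap
  -- the product basis
  set v' : (Fin dA × Fin dB) → (Fin dA × Fin dB) → ℂ :=
    fun j => fun i => vA j.1 i.1 * vB j.2 i.2 with hv'def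
  have hv' : ∀ j k, star (v' j) ⬝ᵥ v' k = if j = k then 1 else 0 := by
    intro j k
    rw [hv'def]
    rw [GSO.kron_dot (vA j.1) (vA k.1) (vB j.2) (vB k.2), hvA, hvB]
    by_cases h1 : j.1 = k.1 <;> by_cases h2 : j.2 = k.2 <;>
      simp [h1, h2, Prod.ext_iff]
  set H0 : Matrix (Fin dA × Fin dB) (Fin dA × Fin dB) ℂ :=
    HA ⊗ₖ (1 : Matrix (Fin dB) (Fin dB) ℂ) + (1 : Matrix (Fin dA) (Fin dA) ℂ) ⊗ₖ HB with hH0def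
  have heig' : ∀ j, H0.mulVec (v' j) = ((α j.1 + β j.2 : ℝ) : ℂ) • v' j := by
    intro j
    rw [hH0def, hv'def, Matrix.add_mulVec]
    rw [GSO.kron_mulVec HA (1 : Matrix (Fin dB) (Fin dB) ℂ) (vA j.1) (vB j.2),
      GSO.kron_mulVec (1 : Matrix (Fin dA) (Fin dA) ℂ) HB (vA j.1) (vB j.2),
      heigA, heigB, Matrix.one_mulVec, Matrix.one_mulVec]
    funext i
    simp only [Pi.add_apply, Pi.smul_apply, smul_eq_mul]
    push_cast
    ring
  -- the product ground vector
  set φ : Fin dA × Fin dB → ℂ := fun i => ψA i.1 * ψB i.2 with hφdef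
  have hφ1 : star φ ⬝ᵥ φ = 1 := by
    rw [hφdef, GSO.kron_dot ψA ψA ψB ψB, hψA1, hψB1, one_mul]
  have hφeig : H0.mulVec φ = ((α i0 + β j0 : ℝ) : ℂ) • φ := by
    rw [hH0def, hφdef, Matrix.add_mulVec]
    rw [GSO.kron_mulVec HA (1 : Matrix (Fin dB) (Fin dB) ℂ) ψA ψB,
      GSO.kron_mulVec (1 : Matrix (Fin dA) (Fin dA) ℂ) HB ψA ψB,
      hψA, hψB, Matrix.one_mulVec, Matrix.one_mulVec]
    funext i
    simp only [Pi.add_apply, Pi.smul_apply, smul_eq_mul]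
    push_cast
    ring
  -- hermiticity of the full Hamiltonian
  have hH0 : H0.IsHermitian := by
    have h1 : (HA ⊗ₖ (1 : Matrix (Fin dB) (Fin dB) ℂ)).IsHermitian := by
      show _ᴴ = _
      rw [GSO.kron_conjTranspose, hHA.eq, Matrix.conjTranspose_one]
    have h2 : ((1 : Matrix (Fin dA) (Fin dA) ℂ) ⊗ₖ HB).IsHermitian := by
      show _ᴴ = _
      rw [GSO.kron_conjTranspose, hHB.eq, Matrix.conjTranspose_one]
    exact h1.add h2
  have hH : (H0 + Aint).IsHermitian := hH0.add hAint
  -- coefficients of ψ in the product basis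
  set q : Fin dA × Fin dB → ℝ := fun j => Complex.normSq (star (v' j) ⬝ᵥ ψ) with hq
  have hq0 : ∀ j, 0 ≤ q j := fun j => Complex.normSq_nonneg _
  have hqsum : ∑ j, q j = 1 := by
    have h := GSO.parseval v' hv' ψ
    rw [hψ1] at h
    exact_mod_cast h.symm
  have hray : star ψ ⬝ᵥ H0.mulVec ψ = ∑ j, ((α j.1 + β j.2 : ℝ) : ℂ) * (q j : ℂ) :=
    GSO.rayleigh H0 v' hv' (fun j => α j.1 + β j.2) heig' ψ
  have hEψ : star ψ ⬝ᵥ (H0 + Aint).mulVec ψ = (E0 : ℂ) := by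
    rw [hH0def]
    rw [hψ, dotProduct_smul, smul_eq_mul, hψ1, mul_one]
  have hsplit : star ψ ⬝ᵥ (H0 + Aint).mulVec ψ
      = star ψ ⬝ᵥ H0.mulVec ψ + star ψ ⬝ᵥ Aint.mulVec ψ := by
    rw [Matrix.add_mulVec, dotProduct_add]
  have hAψ : ‖star ψ ⬝ᵥ Aint.mulVec ψ‖ ≤ a := GSO.abs_dot_le Aint ψ hψ1
  have hsumψ : (∑ j, (α j.1 + β j.2) * q j) = E0 - (star ψ ⬝ᵥ Aint.mulVec ψ).re := by
    have hcast : ((∑ j, (α j.1 + β j.2) * q j : ℝ) : ℂ)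
        = (E0 : ℂ) - star ψ ⬝ᵥ Aint.mulVec ψ := by
      have h2 : star ψ ⬝ᵥ H0.mulVec ψ = (E0 : ℂ) - star ψ ⬝ᵥ Aint.mulVec ψ := by
        rw [← hEψ, hsplit]; ring
      rw [← h2, hray]
      push_cast
      ring
    have := congrArg Complex.re hcast
    simpa using this
  have hBound : (∑ j, (α j.1 + β j.2) * q j) ≤ E0 + a := by
    rw [hsumψ]
    have h1 : |(star ψ ⬝ᵥ Aint.mulVec ψ).re| ≤ a :=
      le_trans (Complex.abs_re_le_norm _) hAψ
    have := abs_le.mp h1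
    linarith [this.1]
  -- lower bound on the Rayleigh quotient of ψ w.r.t. H0
  have hα1le : ∀ j : Fin dA, j ≠ i0 → α i1 ≤ α j := by
    intro j hj
    apply hα
    rw [Fin.le_def]
    have hj' : (j : ℕ) ≠ 0 := by
      intro h
      exact hj (by rw [hi0]; exact Fin.ext h)
    have : (i1 : ℕ) = 1 := by rw [hi1]
    omega
  have hβ1le : ∀ j : Fin dB, j ≠ j0 → β j1 ≤ β j := by
    intro j hj
    apply hβ
    rw [Fin.le_def]
    have hj' : (j : ℕ) ≠ 0 := by
      intro h
      exact hj (by rw [hj0]; exact Fin.ext h)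
    have : (j1 : ℕ) = 1 := by rw [hj1]
    omega
  have hα0le : ∀ j : Fin dA, α i0 ≤ α j := by
    intro j
    apply hα
    rw [Fin.le_def]
    have : (i0 : ℕ) = 0 := by rw [hi0]
    omega
  have hβ0le : ∀ j : Fin dB, β j0 ≤ β j := by
    intro j
    apply hβ
    rw [Fin.le_def]
    have : (j0 : ℕ) = 0 := by rw [hj0]
    omega
  have hμbound : ∀ j : Fin dA × Fin dB, j ≠ (i0, j0) →
      (α i0 + β j0) + γ ≤ α j.1 + β j.2 := by
    intro j hj
    have hγle1 : γ ≤ α i1 - α i0 := min_le_left _ _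
    have hγle2 : γ ≤ β j1 - β j0 := min_le_right _ _
    by_cases h1 : j.1 = i0
    · have h2 : j.2 ≠ j0 := by
        intro h2
        exact hj (Prod.ext h1 h2)
      have := hβ1le j.2 h2
      have := hα0le j.1
      linarith
    · have := hα1le j.1 h1
      have := hβ0le j.2
      linarith
  have hlow : (α i0 + β j0) + γ * (1 - q (i0, j0)) ≤ ∑ j, (α j.1 + β j.2) * q j := by
    have hterm : ∀ j : Fin dA × Fin dB,
        ((α i0 + β j0) + (if j = (i0, j0) then 0 else γ)) * q j ≤ (α j.1 + β j.2) * q j := by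
      intro j
      by_cases h : j = (i0, j0)
      · subst h
        simp
      · simp only [h, if_neg h]
        exact mul_le_mul_of_nonneg_right (hμbound j h) (hq0 j)
    have hsum1 : ∑ j, ((α i0 + β j0) + (if j = (i0, j0) then 0 else γ)) * q j
        ≤ ∑ j, (α j.1 + β j.2) * q j := Finset.sum_le_sum fun j _ => hterm j
    have hsum2 : ∑ j, ((α i0 + β j0) + (if j = (i0, j0) then 0 else γ)) * q j
        = (α i0 + β j0) + γ * (1 - q (i0, j0)) := by
      have hexp : ∀ j : Fin dA × Fin dB,
          ((α i0 + β j0) + (if j = (i0, j0) then 0 else γ)) * q j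
          = (α i0 + β j0) * q j + (γ * q j - (if j = (i0, j0) then γ * q j else 0)) := by
        intro j
        by_cases h : j = (i0, j0) <;> simp [h] <;> ring
      rw [Finset.sum_congr rfl fun j _ => hexp j]
      rw [Finset.sum_add_distrib, Finset.sum_sub_distrib, ← Finset.mul_sum, ← Finset.mul_sum,
        Finset.sum_ite_eq' Finset.univ (i0, j0) (fun j => γ * q j), hqsum]
      simp
      ring
    linarith
  have hkey1 : (α i0 + β j0) + γ * (1 - q (i0, j0)) ≤ E0 + a := le_trans hlow hBound
  -- upper bound on E0 via the variational principle
  have hE0up : E0 ≤ (α i0 + β j0) + a := by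
    set u : (Fin dA × Fin dB) → (Fin dA × Fin dB) → ℂ :=
      fun j => ⇑(hH.eigenvectorBasis j) with hu_def
    have hu : ∀ j k, star (u j) ⬝ᵥ u k = if j = k then 1 else 0 :=
      fun j k => GSO.eigBasis_dot hH j k
    have hueig : ∀ j, (H0 + Aint).mulVec (u j) = ((hH.eigenvalues j : ℝ) : ℂ) • u j :=
      fun j => GSO.eigBasis_mulVec hH j
    have hE0le : ∀ j, E0 ≤ hH.eigenvalues j := by
      intro j
      exact hE0min (hH.eigenvalues j) (u j) (GSO.eigBasis_ne_zero hH j) (hueig j)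
    set q' : Fin dA × Fin dB → ℝ := fun j => Complex.normSq (star (u j) ⬝ᵥ φ) with hq'
    have hq'0 : ∀ j, 0 ≤ q' j := fun j => Complex.normSq_nonneg _
    have hq'sum : ∑ j, q' j = 1 := by
      have h := GSO.parseval u hu φ
      rw [hφ1] at h
      exact_mod_cast h.symm
    have hrayφ : star φ ⬝ᵥ (H0 + Aint).mulVec φ
        = ∑ j, ((hH.eigenvalues j : ℝ) : ℂ) * (q' j : ℂ) :=
      GSO.rayleigh (H0 + Aint) u hu hH.eigenvalues (fun j => hueig j) φ
    have hsplitφ : star φ ⬝ᵥ (H0 + Aint).mulVec φ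
        = ((α i0 + β j0 : ℝ) : ℂ) + star φ ⬝ᵥ Aint.mulVec φ := by
      rw [Matrix.add_mulVec, dotProduct_add, hφeig, dotProduct_smul, smul_eq_mul, hφ1, mul_one]
    have hAφ : ‖star φ ⬝ᵥ Aint.mulVec φ‖ ≤ a := GSO.abs_dot_le Aint φ hφ1
    have hsumφ : (∑ j, hH.eigenvalues j * q' j) = (α i0 + β j0) + (star φ ⬝ᵥ Aint.mulVec φ).re := by
      have hcast : ((∑ j, hH.eigenvalues j * q' j : ℝ) : ℂ)
          = ((α i0 + β j0 : ℝ) : ℂ) + star φ ⬝ᵥ Aint.mulVec φ := by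
        rw [← hsplitφ, hrayφ]
        push_cast
        ring
      have := congrArg Complex.re hcast
      simpa using this
    have hElow : E0 ≤ ∑ j, hH.eigenvalues j * q' j := by
      calc E0 = ∑ j, E0 * q' j := by rw [← Finset.mul_sum, hq'sum, mul_one]
        _ ≤ ∑ j, hH.eigenvalues j * q' j :=
            Finset.sum_le_sum fun j _ => mul_le_mul_of_nonneg_right (hE0le j) (hq'0 j)
    have h1 : (star φ ⬝ᵥ Aint.mulVec φ).re ≤ a :=
      le_trans (le_trans (le_abs_self _) (Complex.abs_re_le_norm _)) hAφ
    linarith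
  have hkey2 : γ * (1 - q (i0, j0)) ≤ 2 * a := by linarith
  -- ψA is proportional to vA i0, ψB to vB j0
  set cA : ℂ := star (vA i0) ⬝ᵥ ψA with hcA
  set cB : ℂ := star (vB j0) ⬝ᵥ ψB with hcB
  have hcjA : ∀ j, j ≠ i0 → star (vA j) ⬝ᵥ ψA = 0 := by
    intro j hj
    refine GSO.coeff_zero HA hHA (vA j) (α j) (heigA j) ψA (α i0) hψA ?_
    have := hα1le j hj
    exact ne_of_gt (by linarith)
  have hcjB : ∀ j, j ≠ j0 → star (vB j) ⬝ᵥ ψB = 0 := by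
    intro j hj
    refine GSO.coeff_zero HB hHB (vB j) (β j) (heigB j) ψB (β j0) hψB ?_
    have := hβ1le j hj
    exact ne_of_gt (by linarith)
  have hψAexp : ∀ i, ψA i = cA * vA i0 i := by
    intro i
    rw [GSO.expand vA hvA ψA i,
      Fintype.sum_eq_single i0 (fun b hb => by rw [hcjA b hb, zero_mul]), hcA]
  have hψBexp : ∀ i, ψB i = cB * vB j0 i := by
    intro i
    rw [GSO.expand vB hvB ψB i,
      Fintype.sum_eq_single j0 (fun b hb => by rw [hcjB b hb, zero_mul]), hcB]
  have hcA1 : Complex.normSq cA = 1 := by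
    have h := GSO.parseval vA hvA ψA
    rw [hψA1] at h
    have h2 : ∑ j, Complex.normSq (star (vA j) ⬝ᵥ ψA) = 1 := by exact_mod_cast h.symm
    rwa [Fintype.sum_eq_single i0 (fun b hb => by rw [hcjA b hb]; simp)] at h2
  have hcB1 : Complex.normSq cB = 1 := by
    have h := GSO.parseval vB hvB ψB
    rw [hψB1] at h
    have h2 : ∑ j, Complex.normSq (star (vB j) ⬝ᵥ ψB) = 1 := by exact_mod_cast h.symm
    rwa [Fintype.sum_eq_single j0 (fun b hb => by rw [hcjB b hb]; simp)] at h2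
  -- the overlap equals the (i0, j0) coefficient weight
  have hφeq : φ = (cA * cB) • v' (i0, j0) := by
    funext i
    rw [hφdef]
    show ψA i.1 * ψB i.2 = (cA * cB) * v' (i0, j0) i
    rw [hψAexp i.1, hψBexp i.2, hv'def]
    ring
  have hdot : star ψ ⬝ᵥ φ = (cA * cB) * (star ψ ⬝ᵥ v' (i0, j0)) := by
    rw [hφeq, dotProduct_smul, smul_eq_mul]
  have hns : Complex.normSq (star ψ ⬝ᵥ φ) = q (i0, j0) := by
    rw [hdot, map_mul Complex.normSq, map_mul Complex.normSq, hcA1, hcB1,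
      GSO.dot_comm_star ψ (v' (i0, j0)), Complex.normSq_conj, hq]
    ring
  -- final arithmetic
  have hgoal1 : 1 - q (i0, j0) ≤ 2 * a / γ := by
    rw [le_div_iff₀ hγpos]
    linarith
  have hgoal2 : 2 * a / γ ≤ Real.pi * a / (γ - 2 * a) := by
    rw [div_le_div_iff₀ hγpos (by linarith)]
    nlinarith [Real.pi_gt_three, mul_nonneg ha0 hγpos.le, sq_nonneg a,
      mul_nonneg (mul_nonneg ha0 ha0) hγpos.le]
  calc 1 - Real.pi * a / (γ - 2 * a) ≤ q (i0, j0) := by linarith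
    _ = ‖star ψ ⬝ᵥ φ‖ ^ 2 := by rw [Complex.sq_norm, hns]
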